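/- Let r ≥ 2 and let a, b, c, d be positive reals with a ≥ max(b, c, d) and a + b ≥ c + d. Then D_r(a,b) ≥ D_r(c,d), where D_r(x,y) = (x^r - y^r)/(x - y) for x ≠ y and D_r(x,x) = r x^{r-1}. -/

import Mathlib

open Real Set intervalIntegral

noncomputable def D (r x y : ℝ) : ℝ :=
  if x = y then r * x ^ (r - 1) else (x ^ r - y ^ r) / (x - y)

-- convexity pair lemma
lemma conv2 {p u v u' v' : ℝ} (hp : 1 ≤ p) (hv : 0 ≤ v) (hu' : 0 ≤ u') (hv' : 0 ≤ v')
    (h1 : u' ≤ u) (h2 : v' ≤ u) (h3 : u' + v' ≤ u + v) :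
    u' ^ p + v' ^ p ≤ u ^ p + v ^ p := by
  have hp0 : 0 ≤ p := by linarith
  rcases le_or_gt v' v with h | h
  · have := Real.rpow_le_rpow hu' h1 hp0
    have := Real.rpow_le_rpow hv' h hp0
    linarith
  · have hvu : v < u := lt_of_lt_of_le h h2
    have hne : u - v ≠ 0 := by linarith
    set l : ℝ := (u - v') / (u - v) with hl
    have hl0 : 0 ≤ l := by
      apply div_nonneg <;> linarith
    have hl1 : l ≤ 1 := by
      rw [div_le_one (by linarith)]; linarith
    have hc := convexOn_rpow hp
    have hlv : l * (u - v) = u - v' := by rw [hl]; field_simp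
    have e1 : l * v + (1 - l) * u = v' := by linear_combination -hlv
    have e2 : (1 - l) * v + l * u = u + v - v' := by linear_combination hlv
    have hl0' : (0:ℝ) ≤ 1 - l := by linarith
    have hs1 : l + (1 - l) = 1 := by ring
    have hs2 : (1 - l) + l = 1 := by ring
    have c1 := hc.2 (mem_Ici.mpr hv) (mem_Ici.mpr (le_trans hv hvu.le)) hl0 hl0' hs1
    have c2 := hc.2 (mem_Ici.mpr hv) (mem_Ici.mpr (le_trans hv hvu.le)) hl0' hl0 hs2
    simp only [smul_eq_mul] at c1 c2
    rw [e1] at c1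
    rw [e2] at c2
    have hmono : u' ^ p ≤ (u + v - v') ^ p :=
      Real.rpow_le_rpow hu' (by linarith) hp0
    linarith

-- integral representation
lemma D_int {r x y : ℝ} (hr : 2 ≤ r) (hx : 0 < x) (hy : 0 < y) :
    D r x y = ∫ t in (0:ℝ)..1, r * (y + t * (x - y)) ^ (r - 1) := by
  have hr0 : (0:ℝ) < r := by linarith
  by_cases hxy : x = y
  · subst hxy
    simp [D, intervalIntegral.integral_const]
  · have hne : x - y ≠ 0 := sub_ne_zero.mpr hxy
    rw [D, if_neg hxy]
    have : (fun t : ℝ => r * (y + t * (x - y)) ^ (r - 1))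
        = fun t : ℝ => r * ((x - y) * t + y) ^ (r - 1) := by
      funext t; ring_nf
    rw [this, intervalIntegral.integral_const_mul]
    rw [intervalIntegral.integral_comp_mul_add (fun s => s ^ (r - 1)) hne y]
    rw [integral_rpow (Or.inl (by linarith))]
    rw [sub_add_cancel]
    simp only [mul_zero, zero_add, mul_one, smul_eq_mul]
    field_simp
    ring

theorem stmt_3 (r a b c d : ℝ) (hr : 2 ≤ r)
    (hb : 0 < b) (hc : 0 < c) (hd : 0 < d)
    (ha : max b (max c d) ≤ a) (hsum : c + d ≤ a + b) :
    D r c d ≤ D r a b := by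
  have hab : b ≤ a := le_trans (le_max_left _ _) ha
  have hac : c ≤ a := le_trans (le_trans (le_max_left _ _) (le_max_right _ _)) ha
  have had : d ≤ a := le_trans (le_trans (le_max_right _ _) (le_max_right _ _)) ha
  have ha0 : 0 < a := lt_of_lt_of_le hb hab
  have hr0 : (0:ℝ) ≤ r := by linarith
  have hp : 1 ≤ r - 1 := by linarith
  -- pointwise key lemma, for t with 1/2 ≤ t ≤ 1
  have key : ∀ t : ℝ, 1/2 ≤ t → t ≤ 1 →
      (d + t * (c - d)) ^ (r-1) + (d + (1-t) * (c - d)) ^ (r-1)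
      ≤ (b + t * (a - b)) ^ (r-1) + (b + (1-t) * (a - b)) ^ (r-1) := by
    intro t ht1 ht2
    apply conv2 hp
    · nlinarith
    · nlinarith
    · nlinarith
    · nlinarith
    · nlinarith
    · nlinarith
  -- full pointwise lemma on [0,1]
  have key' : ∀ t ∈ Icc (0:ℝ) 1,
      r * (d + t * (c - d)) ^ (r-1) + r * (d + (1-t) * (c - d)) ^ (r-1)
      ≤ r * (b + t * (a - b)) ^ (r-1) + r * (b + (1-t) * (a - b)) ^ (r-1) := by
    rintro t ⟨ht0, ht1⟩
    rcases le_or_gt (1/2) t with h | h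
    · have := key t h ht1
      nlinarith
    · have := key (1 - t) (by linarith) (by linarith)
      rw [sub_sub_cancel] at this
      nlinarith
  -- continuity / integrability
  have cont : ∀ x y : ℝ, Continuous (fun t : ℝ => r * (y + t * (x - y)) ^ (r-1)) := by
    intro x y
    exact continuous_const.mul ((Real.continuous_rpow_const (by linarith)).comp
      (continuous_const.add (continuous_id.mul continuous_const)))
  have refl_int : ∀ x y : ℝ,
      (∫ t in (0:ℝ)..1, r * (y + (1 - t) * (x - y)) ^ (r-1))
      = ∫ t in (0:ℝ)..1, r * (y + t * (x - y)) ^ (r-1) := by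
    intro x y
    have := intervalIntegral.integral_comp_sub_left
      (f := fun t : ℝ => r * (y + t * (x - y)) ^ (r-1)) (a := (0:ℝ)) (b := 1) 1
    simpa using this
  have cont' : ∀ x y : ℝ, Continuous (fun t : ℝ => r * (y + (1 - t) * (x - y)) ^ (r-1)) := by
    intro x y
    exact continuous_const.mul ((Real.continuous_rpow_const (by linarith)).comp
      (continuous_const.add ((continuous_const.sub continuous_id).mul continuous_const)))
  have hmain : (∫ t in (0:ℝ)..1, (r * (d + t * (c - d)) ^ (r-1) + r * (d + (1 - t) * (c - d)) ^ (r-1)))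
      ≤ ∫ t in (0:ℝ)..1, (r * (b + t * (a - b)) ^ (r-1) + r * (b + (1 - t) * (a - b)) ^ (r-1)) := by
    apply intervalIntegral.integral_mono_on (by norm_num)
    · exact ((cont c d).add (cont' c d)).intervalIntegrable 0 1
    · exact ((cont a b).add (cont' a b)).intervalIntegrable 0 1
    · exact key'
  rw [intervalIntegral.integral_add ((cont c d).intervalIntegrable 0 1)
      ((cont' c d).intervalIntegrable 0 1),
    intervalIntegral.integral_add ((cont a b).intervalIntegrable 0 1)
      ((cont' a b).intervalIntegrable 0 1)] at hmain
  rw [refl_int c d, refl_int a b] at hmain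
  rw [D_int hr hc hd, D_int hr ha0 hb]
  linarith
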